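/- Let H = G[N[L]] and H' = G[N[L']] be two L-configurations of a connected claw-free (k+l+1)-regular graph G with l ∈ {2,3}, k ≥ l, and G not isomorphic to K_{k+l+2}. If V(H) ∩ V(H') ≠ ∅, then V(H) = V(H'). -/

import Mathlib

open SimpleGraph

/-- Closed neighborhood of a set of vertices: `N[S]`. -/
def closedNbhd {V : Type*} (G : SimpleGraph V) (S : Set V) : Set V :=
  S ∪ {v | ∃ u ∈ S, G.Adj u v}

/-- The monitored sets `P^i(S)` of the k-power domination process:
`P^0(S) = N[S]`, `P^{i+1}(S) = ⋃ {N[v] : v ∈ P^i(S), |N[v] \ P^i(S)| ≤ k}`. -/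
def monitored {V : Type*} (G : SimpleGraph V) (k : ℕ) (S : Set V) : ℕ → Set V
  | 0 => closedNbhd G S
  | i + 1 => {w | ∃ v ∈ monitored G k S i,
      (closedNbhd G {v} \ monitored G k S i).ncard ≤ k ∧ w ∈ closedNbhd G {v}}

/-- `P^∞(S)`, realized as `P^{|V|}(S)` on a finite vertex type. -/
def monitoredInf {V : Type*} (G : SimpleGraph V) (k : ℕ) (S : Set V) : Set V :=
  monitored G k S (Nat.card V)

/-- `S` is a k-power dominating set. -/
def IsKPDS {V : Type*} (G : SimpleGraph V) (k : ℕ) (S : Set V) : Prop :=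
  monitoredInf G k S = Set.univ

/-- The k-power domination number `γ_{p,k}(G)`. -/
noncomputable def powerDomNumber {V : Type*} (G : SimpleGraph V) (k : ℕ) : ℕ :=
  sInf {m | ∃ S : Set V, S.Finite ∧ S.ncard = m ∧ IsKPDS G k S}

/-- A k-fort: a nonempty set `F` such that every vertex of `N(F) \ F`
has at least `k+1` neighbors in `F`. -/
def IsKFort {V : Type*} (G : SimpleGraph V) (k : ℕ) (F : Set V) : Prop :=
  F.Nonempty ∧ ∀ v ∈ closedNbhd G F \ F, k + 1 ≤ (G.neighborSet v ∩ F).ncard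

/-- Claw-free: no induced `K_{1,3}`. -/
def ClawFree {V : Type*} (G : SimpleGraph V) : Prop :=
  ∀ u a b c : V, G.Adj u a → G.Adj u b → G.Adj u c → a ≠ b → a ≠ c → b ≠ c →
    G.Adj a b ∨ G.Adj a c ∨ G.Adj b c

/-- `r`-regular. -/
def RegularOfDegree {V : Type*} (G : SimpleGraph V) (r : ℕ) : Prop :=
  ∀ v : V, (G.neighborSet v).ncard = r

/-- The domination number `γ(G)`. -/
noncomputable def domNumber {V : Type*} (G : SimpleGraph V) : ℕ :=
  sInf {m | ∃ S : Set V, S.Finite ∧ S.ncard = m ∧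
    ∀ v : V, v ∈ S ∨ ∃ u ∈ S, G.Adj v u}

/-- The total domination number `γ_t(G)`. -/
noncomputable def totalDomNumber {V : Type*} (G : SimpleGraph V) : ℕ :=
  sInf {m | ∃ S : Set V, S.Finite ∧ S.ncard = m ∧ ∀ v : V, ∃ u ∈ S, G.Adj v u}

section Aux

variable {V : Type*} [Finite V] {G : SimpleGraph V} {k l : ℕ}

private lemma disj2 {A B N : Set V} (hA : A ⊆ N) (hB : B ⊆ N) (hAB : Disjoint A B) :
    A.ncard + B.ncard ≤ N.ncard := by
  rw [← Set.ncard_union_eq hAB (Set.toFinite A) (Set.toFinite B)]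
  exact Set.ncard_le_ncard (Set.union_subset hA hB) (Set.toFinite N)

private lemma disj3 {A B C N : Set V} (hA : A ⊆ N) (hB : B ⊆ N) (hC : C ⊆ N)
    (hAB : Disjoint A B) (hAC : Disjoint A C) (hBC : Disjoint B C) :
    A.ncard + B.ncard + C.ncard ≤ N.ncard := by
  have h1 : Disjoint (A ∪ B) C := Set.disjoint_union_left.mpr ⟨hAC, hBC⟩
  calc A.ncard + B.ncard + C.ncard
      = (A ∪ B).ncard + C.ncard := by
        rw [Set.ncard_union_eq hAB (Set.toFinite A) (Set.toFinite B)]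
    _ = ((A ∪ B) ∪ C).ncard :=
        (Set.ncard_union_eq h1 (Set.toFinite _) (Set.toFinite C)).symm
    _ ≤ N.ncard :=
        Set.ncard_le_ncard (Set.union_subset (Set.union_subset hA hB) hC) (Set.toFinite N)

private lemma mem_cn_of_adj {S : Set V} {u v : V} (hu : u ∈ S) (h : G.Adj u v) :
    v ∈ closedNbhd G S :=
  Set.mem_union_right _ ⟨u, hu, h⟩

/-- Main inclusion lemma: if the cliques `L` and `L'` share a vertex, then
`N[L] ⊆ N[L']`. -/
private lemma incl_of_common (hk : l ≤ k) (hreg : RegularOfDegree G (k + l + 1))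
    {L L' : Set V} (hLc : G.IsClique L) (hLf : IsKFort G k L)
    (hL'c : G.IsClique L') (hL'f : IsKFort G k L')
    {z : V} (hzL : z ∈ L) (hzL' : z ∈ L') :
    closedNbhd G L ⊆ closedNbhd G L' := by
  intro x hx
  by_contra hx'
  have hxnL' : x ∉ L' := fun h => hx' (Set.mem_union_left _ h)
  have hxnadj : ∀ v ∈ L', ¬ G.Adj v x := fun v hv ha => hx' (mem_cn_of_adj hv ha)
  have hxnL : x ∉ L := by
    intro hxL
    have hne : z ≠ x := fun h => hxnL' (h ▸ hzL')
    exact hxnadj z hzL' (hLc hzL hxL hne)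
  -- x ∈ N(L) \ L, so it has ≥ k+1 neighbours in L
  have hxf : k + 1 ≤ (G.neighborSet x ∩ L).ncard := hLf.2 x ⟨hx, hxnL⟩
  -- all L-neighbours of x avoid L'
  have hsubA : G.neighborSet x ∩ L ⊆ L \ L' := by
    rintro v ⟨hvx, hvL⟩
    exact ⟨hvL, fun hvL' => hxnadj v hvL' (G.adj_symm hvx)⟩
  -- L \ L' ⊆ N(L') \ L'
  have hAM' : L \ L' ⊆ closedNbhd G L' \ L' := by
    rintro u ⟨huL, hunL'⟩
    have hne : z ≠ u := fun h => hunL' (h ▸ hzL')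
    exact ⟨mem_cn_of_adj hzL' (hLc hzL huL hne), hunL'⟩
  -- pick u0 ∈ N(x) ∩ L, it lies in N(L') \ L', giving |L'| ≥ k+1
  obtain ⟨u0, hu0⟩ : (G.neighborSet x ∩ L).Nonempty :=
    Set.nonempty_of_ncard_ne_zero (by omega)
  have hu0M' : u0 ∈ closedNbhd G L' \ L' := hAM' (hsubA hu0)
  have hs'1 : k + 1 ≤ L'.ncard :=
    le_trans (hL'f.2 u0 hu0M')
      (Set.ncard_le_ncard Set.inter_subset_right (Set.toFinite L'))
  -- counting at z : |L \ L'| + |L' \ {z}| ≤ deg z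
  have hAz : L \ L' ⊆ G.neighborSet z := by
    rintro u ⟨huL, hunL'⟩
    have hne : z ≠ u := fun h => hunL' (h ▸ hzL')
    exact hLc hzL huL hne
  have hBz : L' \ {z} ⊆ G.neighborSet z := by
    rintro u ⟨huL', hne⟩
    exact hL'c hzL' huL' (fun h => hne (h ▸ rfl))
  have hABz : Disjoint (L \ L') (L' \ {z}) :=
    Set.disjoint_left.mpr fun a ha hb => ha.2 hb.1
  have hcount1 := disj2 hAz hBz hABz
  have hB1 : (L' \ {z}).ncard + 1 = L'.ncard :=
    Set.ncard_diff_singleton_add_one hzL' (Set.toFinite L')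
  have hdegz := hreg z
  -- so |L \ L'| ≤ l + 1; combined with k+1 ≤ |N(x)∩L| ≤ |L\L'| and l ≤ k:
  have hsub2 : (G.neighborSet x ∩ L).ncard ≤ (L \ L').ncard :=
    Set.ncard_le_ncard hsubA (Set.toFinite _)
  have hkl : l = k := by omega
  have hcardA : (L \ L').ncard = k + 1 := by omega
  -- N(x) ∩ L = L \ L'
  have hAeq : G.neighborSet x ∩ L = L \ L' :=
    Set.eq_of_subset_of_ncard_le hsubA (by omega) (Set.toFinite _)
  -- pick w ∈ L \ L'
  obtain ⟨w, hw⟩ : (L \ L').Nonempty := Set.nonempty_of_ncard_ne_zero (by omega)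
  have hwM' : w ∈ closedNbhd G L' \ L' := hAM' hw
  have hwf : k + 1 ≤ (G.neighborSet w ∩ L').ncard := hL'f.2 w hwM'
  -- three disjoint subsets of N(w)
  have hA1 : G.neighborSet w ∩ L' ⊆ G.neighborSet w := Set.inter_subset_left
  have hA2 : (L \ L') \ {w} ⊆ G.neighborSet w := by
    rintro u ⟨⟨huL, _⟩, hne⟩
    exact hLc hw.1 huL (fun h => hne (h ▸ rfl))
  have hxadjw : G.Adj x w := by
    have : w ∈ G.neighborSet x ∩ L := hAeq ▸ hw
    exact this.1
  have hA3 : ({x} : Set V) ⊆ G.neighborSet w := by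
    rintro y rfl
    exact G.adj_symm hxadjw
  have hd12 : Disjoint (G.neighborSet w ∩ L') ((L \ L') \ {w}) :=
    Set.disjoint_left.mpr fun a ha hb => hb.1.2 ha.2
  have hd13 : Disjoint (G.neighborSet w ∩ L') ({x} : Set V) :=
    Set.disjoint_left.mpr fun a ha hb => hxnL' (hb ▸ ha.2)
  have hd23 : Disjoint ((L \ L') \ {w}) ({x} : Set V) :=
    Set.disjoint_left.mpr fun a ha hb => hxnL (hb ▸ ha.1.1)
  have hcount2 := disj3 hA1 hA2 hA3 hd12 hd13 hd23
  have hA2card : ((L \ L') \ {w}).ncard + 1 = (L \ L').ncard :=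
    Set.ncard_diff_singleton_add_one hw (Set.toFinite _)
  have hxcard : ({x} : Set V).ncard = 1 := Set.ncard_singleton x
  have hdegw := hreg w
  omega

/-- Case of disjoint cliques with `w ∈ L ∩ (N(L') \ L')`. -/
private lemma eq_of_L_M' (hk : l ≤ k) (hreg : RegularOfDegree G (k + l + 1))
    {L L' : Set V} (hLc : G.IsClique L) (hLf : IsKFort G k L)
    (hL'c : G.IsClique L') (hL'f : IsKFort G k L')
    (hdisj : ∀ v ∈ L, v ∉ L')
    {w : V} (hwL : w ∈ L) (hwcn : w ∈ closedNbhd G L') (hwnL' : w ∉ L') :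
    closedNbhd G L = closedNbhd G L' := by
  have hwf : k + 1 ≤ (G.neighborSet w ∩ L').ncard := hL'f.2 w ⟨hwcn, hwnL'⟩
  have hs'1 : k + 1 ≤ L'.ncard :=
    le_trans hwf (Set.ncard_le_ncard Set.inter_subset_right (Set.toFinite L'))
  obtain ⟨q, hq⟩ : (G.neighborSet w ∩ L').Nonempty :=
    Set.nonempty_of_ncard_ne_zero (by omega)
  have hqL' : q ∈ L' := hq.2
  have hqnL : q ∉ L := fun h => hdisj q h hqL'
  have hqM : q ∈ closedNbhd G L \ L := ⟨mem_cn_of_adj hwL hq.1, hqnL⟩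
  have hqf : k + 1 ≤ (G.neighborSet q ∩ L).ncard := hLf.2 q hqM
  -- counting at q
  have hAq : G.neighborSet q ∩ L ⊆ G.neighborSet q := Set.inter_subset_left
  have hBq : L' \ {q} ⊆ G.neighborSet q := by
    rintro u ⟨huL', hne⟩
    exact hL'c hqL' huL' (fun h => hne (h ▸ rfl))
  have hdq : Disjoint (G.neighborSet q ∩ L) (L' \ {q}) :=
    Set.disjoint_left.mpr fun a ha hb => hdisj a ha.2 hb.1
  have hcount1 := disj2 hAq hBq hdq
  have hBqcard : (L' \ {q}).ncard + 1 = L'.ncard :=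
    Set.ncard_diff_singleton_add_one hqL' (Set.toFinite L')
  have hdegq := hreg q
  have hkl : l = k := by omega
  have hs' : L'.ncard = k + 1 := by omega
  -- L' ⊆ N(w)
  have hL'Nw : L' ⊆ G.neighborSet w := by
    have heq : G.neighborSet w ∩ L' = L' :=
      Set.eq_of_subset_of_ncard_le Set.inter_subset_right (by omega) (Set.toFinite L')
    rw [← heq]; exact Set.inter_subset_left
  -- L' ⊆ N(L) \ L
  have hL'M : ∀ p ∈ L', p ∈ closedNbhd G L \ L := fun p hp =>
    ⟨mem_cn_of_adj hwL (hL'Nw hp), fun h => hdisj p h hp⟩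
  have hs1 : k + 1 ≤ L.ncard :=
    le_trans hqf (Set.ncard_le_ncard Set.inter_subset_right (Set.toFinite L))
  -- counting at w : (L \ {w}) ⊔ L' ⊆ N(w)
  have hCw : L \ {w} ⊆ G.neighborSet w := by
    rintro u ⟨huL, hne⟩
    exact hLc hwL huL (fun h => hne (h ▸ rfl))
  have hdw : Disjoint (L \ {w}) L' :=
    Set.disjoint_left.mpr fun a ha hb => hdisj a ha.1 hb
  have hcount2 := disj2 hCw hL'Nw hdw
  have hCwcard : (L \ {w}).ncard + 1 = L.ncard :=
    Set.ncard_diff_singleton_add_one hwL (Set.toFinite L)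
  have hdegw := hreg w
  have hs : L.ncard = k + 1 := by omega
  -- N(w) = (L \ {w}) ∪ L'
  have hNw : (L \ {w}) ∪ L' = G.neighborSet w := by
    apply Set.eq_of_subset_of_ncard_le (Set.union_subset hCw hL'Nw) _ (Set.toFinite _)
    rw [Set.ncard_union_eq hdw (Set.toFinite _) (Set.toFinite _)]
    omega
  -- every vertex of N(L) \ L lies in L'
  have hML' : ∀ x, x ∈ closedNbhd G L → x ∉ L → x ∈ L' := by
    intro x hx hxnL
    have hxf : k + 1 ≤ (G.neighborSet x ∩ L).ncard := hLf.2 x ⟨hx, hxnL⟩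
    have hLx : G.neighborSet x ∩ L = L :=
      Set.eq_of_subset_of_ncard_le Set.inter_subset_right (by omega) (Set.toFinite L)
    have hwNx : w ∈ G.neighborSet x := by
      have : w ∈ G.neighborSet x ∩ L := by rw [hLx]; exact hwL
      exact this.1
    have hxNw : x ∈ (L \ {w}) ∪ L' := by
      rw [hNw]
      exact G.adj_symm hwNx
    rcases hxNw with h | h
    · exact absurd h.1 hxnL
    · exact h
  -- neighbourhoods of vertices of L' stay inside L ∪ L'
  have hqN : ∀ p ∈ L', G.neighborSet p ⊆ L ∪ L' := by
    intro p hp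
    have hpM := hL'M p hp
    have hpf : k + 1 ≤ (G.neighborSet p ∩ L).ncard := hLf.2 p hpM
    have hBp : L' \ {p} ⊆ G.neighborSet p := by
      rintro u ⟨huL', hne⟩
      exact hL'c hp huL' (fun h => hne (h ▸ rfl))
    have hdp : Disjoint (G.neighborSet p ∩ L) (L' \ {p}) :=
      Set.disjoint_left.mpr fun a ha hb => hdisj a ha.2 hb.1
    have hcount3 := disj2 (Set.inter_subset_left (t := L)) hBp hdp
    have hBpcard : (L' \ {p}).ncard + 1 = L'.ncard :=
      Set.ncard_diff_singleton_add_one hp (Set.toFinite L')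
    have hdegp := hreg p
    have hNp : (G.neighborSet p ∩ L) ∪ (L' \ {p}) = G.neighborSet p := by
      apply Set.eq_of_subset_of_ncard_le
        (Set.union_subset Set.inter_subset_left hBp) _ (Set.toFinite _)
      rw [Set.ncard_union_eq hdp (Set.toFinite _) (Set.toFinite _)]
      omega
    intro u hu
    have : u ∈ (G.neighborSet p ∩ L) ∪ (L' \ {p}) := by rw [hNp]; exact hu
    rcases this with h | h
    · exact Or.inl h.2
    · exact Or.inr h.1
  -- final set equality
  ext y
  constructor
  · intro hy
    rcases hy with hyL | ⟨v, hvL, hvy⟩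
    · -- y ∈ L : it has a neighbour outside L, necessarily in L'
      have : ∃ u ∈ G.neighborSet y, u ∉ L := by
        by_contra hcon
        push_neg at hcon
        have hsubL : G.neighborSet y ⊆ L \ {y} := fun u hu =>
          ⟨hcon u hu, fun h => G.ne_of_adj hu (by simpa using h.symm)⟩
        have := Set.ncard_le_ncard hsubL (Set.toFinite _)
        have hCy : (L \ {y}).ncard + 1 = L.ncard :=
          Set.ncard_diff_singleton_add_one hyL (Set.toFinite L)
        have hdegy := hreg y
        omega
      obtain ⟨u, huN, hunL⟩ := this
      have huL' : u ∈ L' := hML' u (mem_cn_of_adj hyL huN) hunL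
      exact mem_cn_of_adj huL' (G.adj_symm huN)
    · -- y is a neighbour of v ∈ L
      by_cases hyL : y ∈ L
      · -- handled as above: y ∈ L
        have : ∃ u ∈ G.neighborSet y, u ∉ L := by
          by_contra hcon
          push_neg at hcon
          have hsubL : G.neighborSet y ⊆ L \ {y} := fun u hu =>
            ⟨hcon u hu, fun h => G.ne_of_adj hu (by simpa using h.symm)⟩
          have := Set.ncard_le_ncard hsubL (Set.toFinite _)
          have hCy : (L \ {y}).ncard + 1 = L.ncard :=
            Set.ncard_diff_singleton_add_one hyL (Set.toFinite L)
          have hdegy := hreg y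
          omega
        obtain ⟨u, huN, hunL⟩ := this
        have huL' : u ∈ L' := hML' u (mem_cn_of_adj hyL huN) hunL
        exact mem_cn_of_adj huL' (G.adj_symm huN)
      · have hyL' : y ∈ L' := hML' y (mem_cn_of_adj hvL hvy) hyL
        exact Set.mem_union_left _ hyL'
  · intro hy
    rcases hy with hyL' | ⟨v, hvL', hvy⟩
    · exact (hL'M y hyL').1
    · have : y ∈ L ∪ L' := hqN v hvL' hvy
      rcases this with h | h
      · exact Set.mem_union_left _ h
      · exact (hL'M y h).1

end Aux

theorem Lconfigs_eq_of_inter_nonempty {V : Type*} [Finite V] (G : SimpleGraph V)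
    (k l : ℕ) (hl : l = 2 ∨ l = 3) (hk : l ≤ k) (hconn : G.Connected)
    (hcf : ClawFree G) (hreg : RegularOfDegree G (k + l + 1))
    (hnc : ¬ Nonempty (G ≃g (⊤ : SimpleGraph (Fin (k + l + 2)))))
    (L L' : Set V) (hLclique : G.IsClique L) (hLfort : IsKFort G k L)
    (hL'clique : G.IsClique L') (hL'fort : IsKFort G k L')
    (hint : (closedNbhd G L ∩ closedNbhd G L').Nonempty) :
    closedNbhd G L = closedNbhd G L' := by
  by_cases hLL' : (L ∩ L').Nonempty
  · obtain ⟨z, hzL, hzL'⟩ := hLL'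
    exact Set.Subset.antisymm
      (incl_of_common hk hreg hLclique hLfort hL'clique hL'fort hzL hzL')
      (incl_of_common hk hreg hL'clique hL'fort hLclique hLfort hzL' hzL)
  · have hdisj : ∀ v ∈ L, v ∉ L' := fun v hv hv' => hLL' ⟨v, hv, hv'⟩
    obtain ⟨w, hw, hw'⟩ := hint
    by_cases hwL : w ∈ L
    · have hwnL' : w ∉ L' := hdisj w hwL
      exact eq_of_L_M' hk hreg hLclique hLfort hL'clique hL'fort hdisj hwL hw' hwnL'
    · by_cases hwL' : w ∈ L'
      · exact (eq_of_L_M' hk hreg hL'clique hL'fort hLclique hLfort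
          (fun v hv hv' => hdisj v hv' hv) hwL' hw hwL).symm
      · -- w ∈ (N(L)\L) ∩ (N(L')\L') : impossible by degree count
        have h1 := hLfort.2 w ⟨hw, hwL⟩
        have h2 := hL'fort.2 w ⟨hw', hwL'⟩
        have hd : Disjoint (G.neighborSet w ∩ L) (G.neighborSet w ∩ L') :=
          Set.disjoint_left.mpr fun a ha hb => hdisj a ha.2 hb.2
        have hcount := disj2 (Set.inter_subset_left (t := L))
          (Set.inter_subset_left (t := L')) hd
        have hdeg := hreg w
        omega
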